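/- Let f : [0,1] → ℝ be continuous with graph G = {(x, f(x)) : x ∈ [0,1]}, and let S : ℝ² → ℝ² be given by S(v) = ε·r·v + b with ε ∈ {1, −1}, r ∈ (0,1), b ∈ ℝ², and suppose S(G) ⊆ G. Then the projection J = {x : (x,y) ∈ S(G) for some y} to the first coordinate is a closed subinterval of [0,1] of length r, S(G) = {(x, f(x)) : x ∈ J}, and the oscillation satisfies ω_f(J) = r·ω_f([0,1]). -/

import Mathlib

/-- The oscillation of `f` on a set `J`: `sup_{x,y ∈ J} |f x − f y|`. -/
noncomputable def osc (f : ℝ → ℝ) (J : Set ℝ) : ℝ :=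
  sSup {d : ℝ | ∃ x ∈ J, ∃ y ∈ J, d = |f x - f y|}

lemma sSup_mul_image (r : ℝ) (hr : 0 < r) (s : Set ℝ) (hne : s.Nonempty)
    (hbdd : BddAbove s) : sSup ((fun d => r * d) '' s) = r * sSup s := by
  apply IsLUB.csSup_eq _ (hne.image _)
  constructor
  · rintro _ ⟨x, hx, rfl⟩
    exact mul_le_mul_of_nonneg_left (le_csSup hbdd hx) hr.le
  · intro c hc
    have : sSup s ≤ c / r := by
      apply csSup_le hne
      intro x hx
      have := hc ⟨x, hx, rfl⟩
      exact (le_div_iff₀' hr).mpr this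
    calc r * sSup s ≤ r * (c / r) := mul_le_mul_of_nonneg_left this hr.le
    _ = c := by field_simp

theorem image_of_graph_under_similitude (f : ℝ → ℝ)
    (hf : ContinuousOn f (Set.Icc (0 : ℝ) 1))
    (G : Set (ℝ × ℝ)) (hG : G = (fun x => (x, f x)) '' Set.Icc (0 : ℝ) 1)
    (ε r : ℝ) (hε : ε = 1 ∨ ε = -1) (hr : r ∈ Set.Ioo (0 : ℝ) 1) (b : ℝ × ℝ)
    (S : ℝ × ℝ → ℝ × ℝ) (hS : ∀ v, S v = (ε * r) • v + b)
    (hSG : S '' G ⊆ G)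
    (J : Set ℝ) (hJ : J = {x : ℝ | ∃ y : ℝ, (x, y) ∈ S '' G}) :
    (∃ u v : ℝ, u ≤ v ∧ v - u = r ∧ J = Set.Icc u v ∧ J ⊆ Set.Icc (0 : ℝ) 1) ∧
      S '' G = (fun x => (x, f x)) '' J ∧
      osc f J = r * osc f (Set.Icc (0 : ℝ) 1) := by
  obtain ⟨hr0, hr1⟩ := hr
  -- key fact
  have key : ∀ x ∈ Set.Icc (0:ℝ) 1, (ε*r*x + b.1) ∈ Set.Icc (0:ℝ) 1 ∧
      f (ε*r*x + b.1) = ε*r*f x + b.2 := by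
    intro x hx
    have hmem : S (x, f x) ∈ G := hSG ⟨(x, f x), by rw [hG]; exact ⟨x, hx, rfl⟩, rfl⟩
    rw [hG] at hmem
    obtain ⟨t, ht, heq⟩ := hmem
    rw [hS] at heq
    simp only [Prod.smul_def, smul_eq_mul, Prod.mk_add_mk, Prod.ext_iff,
      Prod.fst_add, Prod.snd_add, Prod.smul_fst, Prod.smul_snd] at heq
    obtain ⟨h1, h2⟩ := heq
    rw [← h1]
    exact ⟨ht, by rw [h2]⟩
  -- J as affine image
  have hJim : J = (fun x => ε*r*x + b.1) '' Set.Icc (0:ℝ) 1 := by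
    rw [hJ]
    ext x
    constructor
    · rintro ⟨y, ⟨p, hp, hSp⟩⟩
      rw [hG] at hp
      obtain ⟨t, ht, rfl⟩ := hp
      rw [hS] at hSp
      refine ⟨t, ht, ?_⟩
      have := congrArg Prod.fst hSp
      simpa using this
    · rintro ⟨t, ht, rfl⟩
      refine ⟨ε*r*f t + b.2, ⟨(t, f t), by rw [hG]; exact ⟨t, ht, rfl⟩, ?_⟩⟩
      rw [hS]
      simp [Prod.ext_iff, mul_comm]
  have hJsub : J ⊆ Set.Icc (0:ℝ) 1 := by
    rw [hJim]
    rintro _ ⟨t, ht, rfl⟩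
    exact (key t ht).1
  refine ⟨?_, ?_, ?_⟩
  · -- interval structure
    rcases hε with hε | hε
    · refine ⟨b.1, r + b.1, by linarith, by ring, ?_, hJsub⟩
      rw [hJim, hε]
      ext x
      simp only [Set.mem_image, Set.mem_Icc]
      constructor
      · rintro ⟨t, ⟨ht0, ht1⟩, rfl⟩
        constructor <;> nlinarith
      · rintro ⟨h0, h1⟩
        refine ⟨(x - b.1)/r, ⟨div_nonneg (by linarith) hr0.le, ?_⟩, by field_simp; ring⟩
        rw [div_le_one hr0]; linarith
    · refine ⟨b.1 - r, b.1, by linarith, by ring, ?_, hJsub⟩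
      rw [hJim, hε]
      ext x
      simp only [Set.mem_image, Set.mem_Icc]
      constructor
      · rintro ⟨t, ⟨ht0, ht1⟩, rfl⟩
        constructor <;> nlinarith
      · rintro ⟨h0, h1⟩
        refine ⟨(b.1 - x)/r, ⟨div_nonneg (by linarith) hr0.le, ?_⟩, by field_simp; ring⟩
        rw [div_le_one hr0]; linarith
  · -- S '' G = graph over J
    rw [hG, hJim, Set.image_image, Set.image_image]
    apply Set.image_congr
    intro t ht
    rw [hS]
    obtain ⟨_, h2⟩ := key t ht
    rw [Prod.ext_iff]
    refine ⟨by simp, ?_⟩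
    simpa using h2.symm
  · -- oscillation
    have hεr : |ε * r| = r := by
      rcases hε with hε | hε <;> rw [hε] <;> simp [abs_of_pos hr0]
    have hset : {d : ℝ | ∃ x ∈ J, ∃ y ∈ J, d = |f x - f y|}
        = (fun d => r * d) '' {d : ℝ | ∃ x ∈ Set.Icc (0:ℝ) 1, ∃ y ∈ Set.Icc (0:ℝ) 1, d = |f x - f y|} := by
      ext d
      constructor
      · rintro ⟨u, hu, v, hv, rfl⟩
        rw [hJim] at hu hv
        obtain ⟨x, hx, rfl⟩ := hu
        obtain ⟨y, hy, rfl⟩ := hv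
        refine ⟨|f x - f y|, ⟨x, hx, y, hy, rfl⟩, ?_⟩
        rw [(key x hx).2, (key y hy).2]
        have : ε*r*f x + b.2 - (ε*r*f y + b.2) = (ε*r) * (f x - f y) := by ring
        rw [this, abs_mul, hεr]
      · rintro ⟨_, ⟨x, hx, y, hy, rfl⟩, rfl⟩
        refine ⟨ε*r*x + b.1, by rw [hJim]; exact ⟨x, hx, rfl⟩,
                ε*r*y + b.1, by rw [hJim]; exact ⟨y, hy, rfl⟩, ?_⟩
        rw [(key x hx).2, (key y hy).2]
        have : ε*r*f x + b.2 - (ε*r*f y + b.2) = (ε*r) * (f x - f y) := by ring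
        rw [this, abs_mul, hεr]
    have hne : {d : ℝ | ∃ x ∈ Set.Icc (0:ℝ) 1, ∃ y ∈ Set.Icc (0:ℝ) 1, d = |f x - f y|}.Nonempty := by
      exact ⟨0, 0, Set.left_mem_Icc.2 zero_le_one, 0, Set.left_mem_Icc.2 zero_le_one, by simp⟩
    have hbdd : BddAbove {d : ℝ | ∃ x ∈ Set.Icc (0:ℝ) 1, ∃ y ∈ Set.Icc (0:ℝ) 1, d = |f x - f y|} := by
      obtain ⟨C, hC⟩ := (isCompact_Icc (a := (0:ℝ)) (b := 1)).exists_bound_of_continuousOn hf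
      refine ⟨2 * C, ?_⟩
      rintro _ ⟨x, hx, y, hy, rfl⟩
      have := hC x hx
      have := hC y hy
      calc |f x - f y| ≤ |f x| + |f y| := abs_sub _ _
        _ ≤ 2 * C := by simp only [Real.norm_eq_abs] at *; linarith
    rw [osc, osc, hset, sSup_mul_image r hr0 _ hne hbdd]
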